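/- Let R = (A,→_R) and R' = (A',→_{R'}) be abstract reduction systems and G : A → A' a mapping such that: (C1) R' is confluent; (C2) R is normalizing; (C3) whenever s →_R t then G(s) and G(t) are related by the reflexive-symmetric-transitive closure of →_{R'}; (C4) if t is a normal form of R then G(t) is a normal form of R'; (C5) G is injective on normal forms of R. Then R is confluent. -/
import Mathlib


open scoped ENNReal NNReal

/-- An element `t` is a *normal form* of the reduction relation `r`
if there is no `u` with `r t u`. -/
def NormalForm {A : Type*} (r : A → A → Prop) (t : A) : Prop := ¬∃ u, r t u

/-- `NFof r s` is the set of normal forms reachable from `s`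
via the reflexive-transitive closure of `r`. -/
def NFof {A : Type*} (r : A → A → Prop) (s : A) : Set A :=
  {t | NormalForm r t ∧ Relation.ReflTransGen r s t}

/-- `l` is a finite path from `s` to `t`: a nonempty list starting at `s`,
ending at `t`, whose consecutive elements are related by `r`.
(A list `[s₀, s₁, …, sₙ]` represents the path `s₀ → s₁ → ⋯ → sₙ`, `n ≥ 0`.) -/
def IsPath {A : Type*} (r : A → A → Prop) (s t : A) (l : List A) : Prop :=
  l.Chain' r ∧ l.head? = some s ∧ l.getLast? = some t

/-- Confluence of an abstract reduction system. -/
def Confluent {A : Type*} (r : A → A → Prop) : Prop :=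
  ∀ s s₁ s₂, Relation.ReflTransGen r s s₁ → Relation.ReflTransGen r s s₂ →
    ∃ t, Relation.ReflTransGen r s₁ t ∧ Relation.ReflTransGen r s₂ t

/-- An ARS is normalizing if every element reaches some normal form. -/
def Normalizing {A : Type*} (r : A → A → Prop) : Prop :=
  ∀ s, ∃ t, NormalForm r t ∧ Relation.ReflTransGen r s t

/-- A probabilistic abstract reduction system (PARS) on a countable set `A`:
a reduction relation `rel` and probabilities `P : A → A → ℝ≥0` with
`P s t > 0` iff `s → t`, and `∑ₜ P s t = 1` for every reducible `s`. -/
structure PARS (A : Type*) [Countable A] where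
  rel : A → A → Prop
  P : A → A → ℝ≥0
  pos_iff : ∀ s t, 0 < P s t ↔ rel s t
  sum_one : ∀ s, (∃ t, rel s t) → ∑' t, (P s t : ℝ≥0∞) = 1

namespace PARS

variable {A : Type*} [Countable A]

/-- The probability of a finite path `[s₀, s₁, …, sₙ]`,
namely `∏_{i=1}^n P(s_{i-1}, s_i)`. -/
noncomputable def pathProb (S : PARS A) (l : List A) : ℝ≥0∞ :=
  ((l.zip l.tail).map fun p => (S.P p.1 p.2 : ℝ≥0∞)).prod

/-- `P(s →* t)`: the sum, over all finite paths from `s` to `t`,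
of the path probabilities. -/
noncomputable def probReach (S : PARS A) (s t : A) : ℝ≥0∞ :=
  ∑' l : {l : List A // IsPath S.rel s t l}, S.pathProb l.1

/-- `∑_{t ∈ NF(s)} P(s →* t)`. -/
noncomputable def probNF (S : PARS A) (s : A) : ℝ≥0∞ :=
  ∑' t : NFof S.rel s, S.probReach s t.1

/-- `P(s →∞) := 1 - ∑_{t ∈ NF(s)} P(s →* t)`, the probability of diverging. -/
noncomputable def probDiverge (S : PARS A) (s : A) : ℝ :=
  1 - (S.probNF s).toReal

/-- Almost-sure termination: every element diverges with probability `0`. -/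
def ASTerminating (S : PARS A) : Prop := ∀ s, S.probDiverge s = 0

/-- Almost-sure convergence: whenever `s →* s₁` and `s →* s₂`, there is a
normal form `t` with `s₁ →* t`, `s₂ →* t` and `P(s₁ →* t) = P(s₂ →* t) = 1`. -/
def ASConvergent (S : PARS A) : Prop :=
  ∀ s s₁ s₂, Relation.ReflTransGen S.rel s s₁ → Relation.ReflTransGen S.rel s s₂ →
    ∃ t, NormalForm S.rel t ∧ Relation.ReflTransGen S.rel s₁ t ∧
      Relation.ReflTransGen S.rel s₂ t ∧
      S.probReach s₁ t = 1 ∧ S.probReach s₂ t = 1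

/-- Local almost-sure convergence: whenever `s → s₁` and `s → s₂`, there is a
normal form `t` with `s₁ →* t`, `s₂ →* t` and `P(s₁ →* t) = P(s₂ →* t) = 1`. -/
def LocallyASConvergent (S : PARS A) : Prop :=
  ∀ s s₁ s₂, S.rel s s₁ → S.rel s s₂ →
    ∃ t, NormalForm S.rel t ∧ Relation.ReflTransGen S.rel s₁ t ∧
      Relation.ReflTransGen S.rel s₂ t ∧
      S.probReach s₁ t = 1 ∧ S.probReach s₂ t = 1

end PARS

/-- Curien–Ghelli: for ARS `r` on `A` and `r'` on `A'` and a map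
`G : A → A'` satisfying (C1)–(C5), `r` is confluent. -/
theorem confluent_of_transformation
    {A A' : Type*} (r : A → A → Prop) (r' : A' → A' → Prop) (G : A → A')
    (hC1 : Confluent r')
    (hC2 : Normalizing r)
    (hC3 : ∀ s t, r s t → Relation.EqvGen r' (G s) (G t))
    (hC4 : ∀ t, NormalForm r t → NormalForm r' (G t))
    (hC5 : ∀ t u, NormalForm r t → NormalForm r u → G t = G u → t = u) :
    Confluent r := by
  -- Confluent r' implies EqvGen r' elements are joinable
  have join : ∀ a b, Relation.EqvGen r' a b →
      ∃ c, Relation.ReflTransGen r' a c ∧ Relation.ReflTransGen r' b c := by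
    intro a b h
    induction h with
    | rel a b hab => exact ⟨b, Relation.ReflTransGen.single hab, Relation.ReflTransGen.refl⟩
    | refl a => exact ⟨a, Relation.ReflTransGen.refl, Relation.ReflTransGen.refl⟩
    | symm a b _ ih => exact ⟨ih.choose, ih.choose_spec.2, ih.choose_spec.1⟩
    | trans a b c _ _ ih1 ih2 =>
      obtain ⟨d, had, hbd⟩ := ih1
      obtain ⟨e, hbe, hce⟩ := ih2
      obtain ⟨f, hdf, hef⟩ := hC1 b d e hbd hbe
      exact ⟨f, had.trans hdf, hce.trans hef⟩
  have lift : ∀ s t, Relation.ReflTransGen r s t → Relation.EqvGen r' (G s) (G t) := by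
    intro s t h
    induction h with
    | refl => exact Relation.EqvGen.refl _
    | tail _ h2 ih => exact ih.trans _ _ _ (hC3 _ _ h2)
  have nf_stop : ∀ x c, NormalForm r' x → Relation.ReflTransGen r' x c → c = x := by
    intro x c hx h
    induction h using Relation.ReflTransGen.head_induction_on with
    | refl => rfl
    | head h _ _ => exact absurd ⟨_, h⟩ hx
  intro s s₁ s₂ h1 h2
  obtain ⟨n₁, hn₁, hs₁n₁⟩ := hC2 s₁
  obtain ⟨n₂, hn₂, hs₂n₂⟩ := hC2 s₂
  have heq : Relation.EqvGen r' (G n₁) (G n₂) :=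
    ((((lift _ _ hs₁n₁).symm _ _).trans _ _ _ ((lift _ _ h1).symm _ _)).trans _ _ _
      (lift _ _ h2)).trans _ _ _ (lift _ _ hs₂n₂)
  obtain ⟨c, hc1, hc2⟩ := join _ _ heq
  have e1 := nf_stop _ _ (hC4 _ hn₁) hc1
  have e2 := nf_stop _ _ (hC4 _ hn₂) hc2
  have : n₁ = n₂ := hC5 _ _ hn₁ hn₂ (e1.symm.trans e2)
  exact ⟨n₁, hs₁n₁, this ▸ hs₂n₂⟩
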